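/- arXiv:2403.17767 — 2 statements merged into one kernel-verified Lean document; each statement's English description precedes it below -/
import Mathlib

section
/- Let Z ~ N(0,1) and q > 0. Then E[tanh(q + √q·Z)] = E[tanh²(q + √q·Z)]. -/
open MeasureTheory ProbabilityTheory Real
open scoped ENNReal NNReal

lemma key_alg (x : ℝ) :
    (Real.tanh (-x) - Real.tanh (-x) ^ 2) * Real.exp (-(2 * x))
      = -(Real.tanh x - Real.tanh x ^ 2) := by
  rw [Real.tanh_neg, Real.tanh_eq_sinh_div_cosh, Real.sinh_eq, Real.cosh_eq]
  have h1 : Real.exp x + Real.exp (-x) ≠ 0 := by positivity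
  have h2 : Real.exp (-(2 * x)) = Real.exp (-x) * Real.exp (-x) := by
    rw [← Real.exp_add]; ring_nf
  have h3 : Real.exp x * Real.exp (-x) = 1 := by
    rw [← Real.exp_add]; simp
  rw [h2]
  field_simp
  linear_combination (-2*Real.exp (-x)*(Real.exp x - Real.exp (-x))*(Real.exp x + Real.exp (-x)) + 2*(-(Real.exp x * Real.exp (-x)) + Real.exp x ^ 2 * Real.exp (-x) + Real.exp (-x) ^ 2 - Real.exp (-x) ^ 3)) * h3

lemma integral_gaussianReal01 (g : ℝ → ℝ) :
    ∫ z, g z ∂(gaussianReal 0 1) = ∫ z, gaussianPDFReal 0 1 z * g z := by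
  rw [gaussianReal_of_var_ne_zero 0 one_ne_zero]
  rw [show gaussianPDF 0 1 = (fun x => ((gaussianPDFReal 0 1 x).toNNReal : ℝ≥0∞)) from rfl]
  rw [integral_withDensity_eq_integral_smul ((measurable_gaussianPDFReal 0 1).real_toNNReal) g]
  congr 1; ext x
  simp [NNReal.smul_def, Real.coe_toNNReal _ (gaussianPDFReal_nonneg 0 1 x)]

lemma tanh_abs_le_one (x : ℝ) : |Real.tanh x| ≤ 1 := by
  rw [Real.tanh_eq_sinh_div_cosh, abs_div, abs_of_pos (Real.cosh_pos x),
    div_le_one (Real.cosh_pos x), abs_le, Real.sinh_eq, Real.cosh_eq]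
  constructor <;> nlinarith [Real.exp_pos x, Real.exp_pos (-x)]

theorem stmt_8 (q : ℝ) (hq : 0 < q) :
    (∫ z, Real.tanh (q + Real.sqrt q * z) ∂(gaussianReal 0 1))
      = ∫ z, Real.tanh (q + Real.sqrt q * z) ^ 2 ∂(gaussianReal 0 1) := by
  set s := Real.sqrt q with hsdef
  have hs : s * s = q := Real.mul_self_sqrt hq.le
  set p := gaussianPDFReal 0 1 with hpdef
  set t : ℝ → ℝ := fun z => Real.tanh (q + s * z) with htdef
  rw [integral_gaussianReal01, integral_gaussianReal01]
  have hpi : Integrable p := integrable_gaussianPDFReal 0 1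
  have htanh : Continuous Real.tanh := by
    rw [show Real.tanh = fun x => Real.sinh x / Real.cosh x from funext Real.tanh_eq_sinh_div_cosh]
    exact Real.continuous_sinh.div Real.continuous_cosh fun x => (Real.cosh_pos x).ne'
  have hmeas : Measurable t :=
    htanh.measurable.comp (measurable_const.add (measurable_const.mul measurable_id))
  have hi1 : Integrable (fun z => p z * t z) := by
    refine hpi.mono' ((measurable_gaussianPDFReal 0 1).mul hmeas).aestronglyMeasurable ?_
    refine Filter.Eventually.of_forall fun z => ?_
    rw [Real.norm_eq_abs, abs_mul, abs_of_nonneg (gaussianPDFReal_nonneg 0 1 z)]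
    calc p z * |t z| ≤ p z * 1 :=
          mul_le_mul_of_nonneg_left (tanh_abs_le_one _) (gaussianPDFReal_nonneg 0 1 z)
      _ = p z := mul_one _
  have hi2 : Integrable (fun z => p z * t z ^ 2) := by
    refine hpi.mono' ((measurable_gaussianPDFReal 0 1).mul (hmeas.pow_const 2)).aestronglyMeasurable ?_
    refine Filter.Eventually.of_forall fun z => ?_
    rw [Real.norm_eq_abs, abs_mul, abs_of_nonneg (gaussianPDFReal_nonneg 0 1 z)]
    calc p z * |t z ^ 2| ≤ p z * 1 := by
          refine mul_le_mul_of_nonneg_left ?_ (gaussianPDFReal_nonneg 0 1 z)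
          rw [abs_pow]
          calc |t z| ^ 2 ≤ 1 ^ 2 := pow_le_pow_left₀ (abs_nonneg _) (tanh_abs_le_one _) 2
            _ = 1 := one_pow 2
      _ = p z := mul_one _
  rw [← sub_eq_zero, ← integral_sub hi1 hi2]
  have hdiff : (fun z => p z * t z - p z * t z ^ 2) = fun z => p z * (t z - t z ^ 2) := by
    funext z; ring
  rw [hdiff]
  set h : ℝ → ℝ := fun z => p z * (t z - t z ^ 2) with hhdef
  have hsym : ∀ z, h (-(z + 2 * s)) = -h z := by
    intro z
    have harg : q + s * (-(z + 2 * s)) = -(q + s * z) := by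
      have h2q : s * (2 * s) = 2 * q := by rw [← hs]; ring
      linear_combination (-2 : ℝ) * hs
    have hp : p (-(z + 2 * s)) = p z * Real.exp (-(2 * (q + s * z))) := by
      simp only [hpdef, gaussianPDFReal]
      rw [mul_assoc _ (rexp _) (rexp _), ← Real.exp_add]
      congr 1
      rw [Real.exp_eq_exp]
      push_cast
      linear_combination (-2 : ℝ) * hs
    simp only [hhdef, htdef, hp, harg]
    have hk := key_alg (q + s * z)
    linear_combination p z * hk
  have hI : ∫ z, h z = ∫ z, h (-(z + 2 * s)) := by
    rw [show (fun z => h (-(z + 2 * s))) = (fun z => (fun y => h (-y)) (z + 2 * s)) from rfl]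
    rw [integral_add_right_eq_self (fun y => h (-y)) (2 * s)]
    exact (integral_neg_eq_self h volume).symm
  have hzero : ∫ z, h z = -∫ z, h z := by
    conv_lhs => rw [hI]
    simp only [hsym]
    exact integral_neg h
  linarith
end

section
/- For every ε ∈ (−1,1) and q > 0, define F_ε(q) = E[ψ_ε(q + √q·Z)] with Z ~ N(0,1) and ψ_ε(t) = (tanh(t) + ε²(1 − tanh(t) − tanh²(t)))/(1 − ε²tanh²(t)). Then F_ε(q) ≤ ε² + (1 − ε²)·F(q), where F(q) = E[tanh(q + √q·Z)]. -/
open MeasureTheory ProbabilityTheory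

noncomputable def ψ (ε t : ℝ) : ℝ :=
  (Real.tanh t + ε ^ 2 * (1 - Real.tanh t - Real.tanh t ^ 2))
    / (1 - ε ^ 2 * Real.tanh t ^ 2)

lemma tanh_mem_Ioo (t : ℝ) : Real.tanh t ∈ Set.Ioo (-1 : ℝ) 1 := by
  have hc : 0 < Real.cosh t := Real.cosh_pos t
  rw [Real.tanh_eq_sinh_div_cosh]
  constructor
  · rw [lt_div_iff₀ hc]
    nlinarith [Real.sinh_add_cosh t, Real.exp_pos t]
  · rw [div_lt_one hc]
    nlinarith [Real.cosh_sub_sinh t, Real.exp_pos (-t)]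

lemma ψ_le (ε : ℝ) (hε : ε ∈ Set.Ioo (-1 : ℝ) 1) (t : ℝ) :
    ψ ε t ≤ ε ^ 2 + (1 - ε ^ 2) * Real.tanh t := by
  obtain ⟨h1, h2⟩ := tanh_mem_Ioo t
  have he : ε ^ 2 < 1 := by nlinarith [hε.1, hε.2]
  have he0 : 0 ≤ ε ^ 2 := sq_nonneg ε
  set u := Real.tanh t
  have hu2 : u ^ 2 ≤ 1 := by nlinarith
  have hden : 0 < 1 - ε ^ 2 * u ^ 2 := by nlinarith
  rw [ψ, div_le_iff₀ hden]
  nlinarith [sq_nonneg u, mul_nonneg (mul_nonneg he0 (sq_nonneg u)) (sub_nonneg.2 h2.le),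
    mul_nonneg (mul_nonneg (mul_nonneg he0 (sq_nonneg u)) (sub_nonneg.2 h2.le)) (sub_nonneg.2 he.le)]

lemma continuous_ψ (ε : ℝ) (hε : ε ∈ Set.Ioo (-1 : ℝ) 1) : Continuous (ψ ε) := by
  have he : ε ^ 2 < 1 := by nlinarith [hε.1, hε.2]
  have hct : Continuous Real.tanh := by
    have : Real.tanh = fun x => Real.sinh x / Real.cosh x :=
      funext fun x => Real.tanh_eq_sinh_div_cosh x
    rw [this]
    exact Real.continuous_sinh.div Real.continuous_cosh fun x => (Real.cosh_pos x).ne'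
  apply Continuous.div
  · continuity
  · continuity
  · intro t
    obtain ⟨h1, h2⟩ := tanh_mem_Ioo t
    have : Real.tanh t ^ 2 ≤ 1 := by nlinarith
    nlinarith [sq_nonneg ε]

lemma abs_ψ_le (ε : ℝ) (hε : ε ∈ Set.Ioo (-1 : ℝ) 1) (t : ℝ) :
    |ψ ε t| ≤ 4 / (1 - ε ^ 2) := by
  obtain ⟨h1, h2⟩ := tanh_mem_Ioo t
  have he : ε ^ 2 < 1 := by nlinarith [hε.1, hε.2]
  have he0 : 0 ≤ ε ^ 2 := sq_nonneg ε
  set u := Real.tanh t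
  have hu2 : u ^ 2 ≤ 1 := by nlinarith
  have hu2' : 0 ≤ u ^ 2 := sq_nonneg u
  have hden : 1 - ε ^ 2 ≤ 1 - ε ^ 2 * u ^ 2 := by nlinarith
  have hdenpos : 0 < 1 - ε ^ 2 := by linarith
  rw [ψ, abs_div, abs_of_pos (lt_of_lt_of_le hdenpos hden)]
  have hnum : |u + ε ^ 2 * (1 - u - u ^ 2)| ≤ 4 := by
    rw [abs_le]
    constructor <;> nlinarith
  exact div_le_div₀ (by norm_num) hnum hdenpos hden

theorem stmt_19 (ε : ℝ) (hε : ε ∈ Set.Ioo (-1 : ℝ) 1) (q : ℝ) (hq : 0 < q) :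
    (∫ z, ψ ε (q + Real.sqrt q * z) ∂(gaussianReal 0 1))
      ≤ ε ^ 2 + (1 - ε ^ 2)
          * ∫ z, Real.tanh (q + Real.sqrt q * z) ∂(gaussianReal 0 1) := by
  have hct : Continuous Real.tanh := by
    have : Real.tanh = fun x => Real.sinh x / Real.cosh x :=
      funext fun x => Real.tanh_eq_sinh_div_cosh x
    rw [this]
    exact Real.continuous_sinh.div Real.continuous_cosh fun x => (Real.cosh_pos x).ne'
  have hcz : Continuous fun z : ℝ => q + Real.sqrt q * z := by continuity
  have hμ : IsProbabilityMeasure (gaussianReal 0 1) := inferInstance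
  have hint1 : Integrable (fun z => ψ ε (q + Real.sqrt q * z)) (gaussianReal 0 1) := by
    refine Integrable.mono' (integrable_const (4 / (1 - ε ^ 2))) ?_ (ae_of_all _ fun z => ?_)
    · exact ((continuous_ψ ε hε).comp hcz).aestronglyMeasurable
    · exact abs_ψ_le ε hε _
  have hint2 : Integrable (fun z => Real.tanh (q + Real.sqrt q * z)) (gaussianReal 0 1) := by
    refine Integrable.mono' (integrable_const 1) ?_ (ae_of_all _ fun z => ?_)
    · exact (hct.comp hcz).aestronglyMeasurable
    · obtain ⟨h1, h2⟩ := tanh_mem_Ioo (q + Real.sqrt q * z)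
      rw [Real.norm_eq_abs, abs_le]; constructor <;> linarith
  calc (∫ z, ψ ε (q + Real.sqrt q * z) ∂(gaussianReal 0 1))
      ≤ ∫ z, (ε ^ 2 + (1 - ε ^ 2) * Real.tanh (q + Real.sqrt q * z)) ∂(gaussianReal 0 1) := by
        refine integral_mono hint1 ?_ fun z => ψ_le ε hε _
        exact (integrable_const _).add (hint2.const_mul _)
    _ = ε ^ 2 + (1 - ε ^ 2) * ∫ z, Real.tanh (q + Real.sqrt q * z) ∂(gaussianReal 0 1) := by
        rw [integral_add (integrable_const _) (hint2.const_mul _), integral_const,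
          integral_const_mul]
        simp [measure_univ]
end
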